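/- Let (X, d) be a metric space, U a closed process on X, and 𝒟 a universe in 𝒫(X). Assume there exists a pullback 𝒟-absorbing family D̂₀ for U and that U is pullback 𝒟-asymptotically compact, and let A(t) = cl(⋃_{D̂ ∈ 𝒟} Λ(D̂, t)) with Λ(D̂, t) = ⋂_{s ≤ t} cl(⋃_{τ ≤ s} U(t, τ)D(τ)) be the associated pullback 𝒟-attractor. Then this attractor is minimal in the following sense: if Ĉ = {C(t) : t ∈ ℝ} is any family of closed subsets of X such that for every D̂ ∈ 𝒟 and every t ∈ ℝ, the Hausdorff semidistance dist_X(U(t, τ)D(τ), C(t)) tends to 0 as τ → −∞, then A(t) ⊆ C(t) for every t ∈ ℝ. -/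

import Mathlib

open Filter Set

/-- Minimality of the pullback `𝒟`-attractor of a closed process: under the existence of a
pullback `𝒟`-absorbing family and pullback `𝒟`-asymptotic compactness, the attractor
`A(t) = cl(⋃_{D̂ ∈ 𝒟} Λ(D̂, t))`, with `Λ(D̂, t) = ⋂_{s ≤ t} cl(⋃_{τ ≤ s} U(t,τ)D(τ))`,
satisfies: for every family `Ĉ = {C(t)}` of closed sets that pullback attracts every
family of `𝒟` (in the Hausdorff semi-distance, here via `infEdist`), one has
`A(t) ⊆ C(t)` for all `t`. -/
theorem pullback_attractor_minimal {X : Type*} [MetricSpace X]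
    (U : ℝ → ℝ → X → X)
    (hU1 : ∀ τ : ℝ, ∀ x : X, U τ τ x = x)
    (hU2 : ∀ τ s t : ℝ, τ ≤ s → s ≤ t → ∀ x : X, U t τ x = U t s (U s τ x))
    (hclosed : ∀ τ t : ℝ, τ ≤ t → ∀ (xn : ℕ → X) (x y : X),
      Tendsto xn atTop (nhds x) →
      Tendsto (fun n => U t τ (xn n)) atTop (nhds y) →
      U t τ x = y)
    (𝒟 : Set (ℝ → Set X)) (h𝒟ne : 𝒟.Nonempty)
    (h𝒟 : ∀ D ∈ 𝒟, ∀ t : ℝ, (D t).Nonempty)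
    (D₀ : ℝ → Set X) (hD₀ne : ∀ t : ℝ, (D₀ t).Nonempty)
    (habs : ∀ D ∈ 𝒟, ∀ t : ℝ, ∃ τ₀ ≤ t, ∀ τ ≤ τ₀, U t τ '' D τ ⊆ D₀ t)
    (hcomp : ∀ t : ℝ, ∀ D ∈ 𝒟, ∀ (τn : ℕ → ℝ) (xn : ℕ → X),
      Tendsto τn atTop atBot → (∀ n, xn n ∈ D (τn n)) →
      ∃ (φ : ℕ → ℕ) (z : X), StrictMono φ ∧
        Tendsto (fun n => U t (τn (φ n)) (xn (φ n))) atTop (nhds z))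
    (A : ℝ → Set X)
    (hA : A = fun t =>
      closure (⋃ D ∈ 𝒟, ⋂ s ∈ Iic t, closure (⋃ τ ∈ Iic s, U t τ '' D τ)))
    (C : ℝ → Set X) (hCclosed : ∀ t : ℝ, IsClosed (C t))
    (hCattr : ∀ t : ℝ, ∀ D ∈ 𝒟,
      Tendsto (fun τ : ℝ => ⨆ x ∈ U t τ '' D τ, EMetric.infEdist x (C t))
        atBot (nhds 0)) :
    ∀ t : ℝ, A t ⊆ C t := by
  intro t
  subst hA
  apply closure_minimal _ (hCclosed t)
  refine iUnion₂_subset fun D hD x hx => ?_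
  have hx0 : EMetric.infEdist x (C t) = 0 := by
    refine le_antisymm (ENNReal.le_of_forall_pos_le_add fun ε hε _ => ?_) zero_le
    rw [zero_add]
    have hε2 : (0 : ENNReal) < (ε : ENNReal) / 2 := by
      simp [ENNReal.div_pos_iff, hε.ne']
    obtain ⟨τ₀, hτ₀⟩ := (((hCattr t D hD).eventually_lt_const hε2).and
      (eventually_le_atBot t)).exists_forall_of_atBot
    have hxs : x ∈ closure (⋃ τ ∈ Iic τ₀, U t τ '' D τ) := by
      have := mem_iInter₂.1 hx τ₀ (hτ₀ τ₀ le_rfl).2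
      exact this
    obtain ⟨y, hy, hxy⟩ := EMetric.mem_closure_iff.1 hxs _ hε2
    obtain ⟨τ, hτ, hyτ⟩ := mem_iUnion₂.1 hy
    have hyC : EMetric.infEdist y (C t) ≤ (ε : ENNReal) / 2 := by
      have h1 : EMetric.infEdist y (C t) ≤
          ⨆ z ∈ U t τ '' D τ, EMetric.infEdist z (C t) := le_iSup₂ (f := fun z _ =>
        EMetric.infEdist z (C t)) y hyτ
      exact h1.trans (hτ₀ τ hτ).1.le
    calc EMetric.infEdist x (C t) ≤ edist x y + EMetric.infEdist y (C t) :=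
          EMetric.infEdist_le_edist_add_infEdist
      _ ≤ (ε : ENNReal) / 2 + (ε : ENNReal) / 2 := add_le_add hxy.le hyC
      _ = ε := ENNReal.add_halves _
  rw [← (hCclosed t).closure_eq]
  exact EMetric.mem_closure_iff_infEdist_zero.2 hx0
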